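/- If f ∈ K[x₁,...,xₙ] is square-free, n ≥ 2, and f is irreducible, then the multiplicity of f at any point P ∈ Kⁿ is at most n − 1. -/

import Mathlib

open MvPolynomial

def MvSquareFree {K : Type*} [CommSemiring K] {n : ℕ} (f : MvPolynomial (Fin n) K) : Prop :=
  ∀ i : Fin n, f.degreeOf i ≤ 1

noncomputable def pointIdeal {K : Type*} [CommRing K] {n : ℕ} (P : Fin n → K) :
    Ideal (MvPolynomial (Fin n) K) :=
  Ideal.span (Set.range fun i : Fin n => X i - C (P i))

section Aux

variable {K : Type*} [CommRing K] {n : ℕ}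

/-- Products add lower bounds on monomial degrees. -/
lemma aux_degsum_mul {a b : ℕ} {r s : MvPolynomial (Fin n) K}
    (hr : ∀ d ∈ r.support, a ≤ d.sum fun _ e => e)
    (hs : ∀ d ∈ s.support, b ≤ d.sum fun _ e => e) :
    ∀ d ∈ (r * s).support, a + b ≤ d.sum fun _ e => e := by
  classical
  intro d hd
  have := MvPolynomial.support_mul r s hd
  rw [Finset.mem_add] at this
  obtain ⟨d1, hd1, d2, hd2, rfl⟩ := this
  rw [Finsupp.sum_add_index' (fun _ => rfl) (fun _ _ _ => rfl)]
  exact add_le_add (hr _ hd1) (hs _ hd2)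

/-- The ideal of polynomials all of whose monomials have total degree at least `q`. -/
def degIdeal (K : Type*) [CommRing K] (n q : ℕ) : Ideal (MvPolynomial (Fin n) K) where
  carrier := {p | ∀ d ∈ p.support, q ≤ d.sum fun _ e => e}
  zero_mem' := by intro d hd; simp at hd
  add_mem' := by
    classical
    intro a b ha hb d hd
    have := MvPolynomial.support_add (p := a) (q := b) hd
    rcases Finset.mem_union.mp this with h | h
    · exact ha d h
    · exact hb d h
  smul_mem' := by
    intro c p hp d hd
    have := aux_degsum_mul (a := 0) (b := _) (r := c) (s := p)
      (fun _ _ => Nat.zero_le _) hp d (by simpa [smul_eq_mul] using hd)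
    simpa using this

lemma span_X_pow_le [Nontrivial K] (q : ℕ) :
    (Ideal.span (Set.range (X : Fin n → MvPolynomial (Fin n) K))) ^ q ≤ degIdeal K n q := by
  induction q with
  | zero => intro p _ d _; exact Nat.zero_le _
  | succ q ih =>
    rw [pow_succ]
    refine Ideal.mul_le.mpr fun r hr s hs => ?_
    have hs1 : s ∈ degIdeal K n 1 := by
      have : Ideal.span (Set.range (X : Fin n → MvPolynomial (Fin n) K)) ≤ degIdeal K n 1 := by
        rw [Ideal.span_le]
        rintro _ ⟨i, rfl⟩ d hd
        classical
        rw [MvPolynomial.support_X] at hd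
        simp only [Finset.mem_singleton] at hd
        subst hd
        simp
      exact this hs
    exact aux_degsum_mul (ih hr) hs1

end Aux

/-- an irreducible square-free polynomial in `n ≥ 2` variables has
multiplicity at most `n - 1` at every point. -/
theorem mult_le_of_irreducible_squareFree {K : Type*} [Field K] [IsAlgClosed K] [CharZero K]
    {n : ℕ} (hn : 2 ≤ n) (f : MvPolynomial (Fin n) K) (hf : MvSquareFree f)
    (hirr : Irreducible f) (P : Fin n → K) (q : ℕ) (hq : f ∈ (pointIdeal P) ^ q) :
    q ≤ n - 1 := by
  classical
  set s : Fin n → MvPolynomial (Fin n) K := fun j => X j + C (P j) with hs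
  set t : Fin n → MvPolynomial (Fin n) K := fun j => X j - C (P j) with ht
  set g : MvPolynomial (Fin n) K := aeval s f with hg
  -- aeval t ∘ aeval s = id
  have hcomp : ∀ p : MvPolynomial (Fin n) K, aeval t (aeval s p) = p := by
    intro p
    have : (aeval t).comp (aeval (R := K) s) = AlgHom.id K (MvPolynomial (Fin n) K) := by
      apply MvPolynomial.algHom_ext
      intro i
      simp [hs, ht, algebraMap_eq]
    calc aeval t (aeval s p) = ((aeval t).comp (aeval (R := K) s)) p := rfl
      _ = p := by rw [this]; rfl
  have hg0 : g ≠ 0 := by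
    intro h
    have := hcomp f
    rw [← hg, h, map_zero] at this
    exact hirr.ne_zero this.symm
  -- g lies in (span (range X))^q
  have hmap : Ideal.map (aeval (R := K) s) (pointIdeal P)
      = Ideal.span (Set.range (X : Fin n → MvPolynomial (Fin n) K)) := by
    rw [pointIdeal, Ideal.map_span]
    congr 1
    rw [← Set.range_comp]
    apply congrArg
    funext i
    simp [hs, algebraMap_eq]
  have hgmem : g ∈ (Ideal.span (Set.range (X : Fin n → MvPolynomial (Fin n) K))) ^ q := by
    rw [← hmap, ← Ideal.map_pow]
    exact Ideal.mem_map_of_mem _ hq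
  have hgdeg : ∀ d ∈ g.support, q ≤ d.sum fun _ e => e := span_X_pow_le q hgmem
  -- degreeOf i g ≤ 1
  have hg1 : ∀ i, degreeOf i g ≤ 1 := by
    intro i
    have hrw : g = ∑ d ∈ f.support, aeval s (monomial d (coeff d f)) := by
      rw [hg]
      conv_lhs => rw [f.as_sum]
      rw [map_sum]
    rw [hrw]
    refine (degreeOf_sum_le _ _ _).trans (Finset.sup_le fun d hd => ?_)
    rw [aeval_monomial]
    refine (degreeOf_mul_le _ _ _).trans ?_
    have h1 : degreeOf i (algebraMap K (MvPolynomial (Fin n) K) (coeff d f)) = 0 :=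
      degreeOf_C _ _
    rw [h1, zero_add]
    have hdi : d i ≤ 1 := le_trans (monomial_le_degreeOf i hd) (hf i)
    refine le_trans ?_ hdi
    calc degreeOf i (d.prod fun j k => s j ^ k)
        ≤ ∑ j ∈ d.support, degreeOf i (s j ^ d j) := by
          rw [Finsupp.prod]; exact degreeOf_prod_le _ _ _
      _ ≤ ∑ j ∈ d.support, d j * degreeOf i (s j) :=
          Finset.sum_le_sum fun j _ => degreeOf_pow_le _ _ _
      _ ≤ ∑ j ∈ d.support, d j * (if i = j then 1 else 0) := by
          refine Finset.sum_le_sum fun j _ => Nat.mul_le_mul_left _ ?_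
          refine (degreeOf_add_le _ _ _).trans ?_
          simp [degreeOf_X, degreeOf_C]
      _ ≤ d i := by
          rw [Finset.sum_congr rfl (fun j _ => by
            rw [mul_ite, mul_one, mul_zero, if_congr (Iff.intro Eq.symm Eq.symm) rfl rfl])]
          rw [Finset.sum_ite_eq' d.support i (fun j => d j)]
          split <;> simp
  -- total degree of g is at most n
  have hsum_eq : ∀ d : Fin n →₀ ℕ, (d.sum fun _ e => e) = ∑ j, d j := fun d =>
    Finsupp.sum_fintype _ _ (fun _ => rfl)
  have hdle : ∀ d ∈ g.support, ∀ j, d j ≤ 1 := by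
    intro d hd j
    exact le_trans (monomial_le_degreeOf j hd) (hg1 j)
  have hdsum_le : ∀ d ∈ g.support, (d.sum fun _ e => e) ≤ n := by
    intro d hd
    rw [hsum_eq]
    calc ∑ j, d j ≤ ∑ _j : Fin n, 1 := Finset.sum_le_sum fun j _ => hdle d hd j
      _ = n := by simp
  -- q ≤ n
  obtain ⟨d0, hd0⟩ := (MvPolynomial.support_nonempty).mpr hg0
  have hqn : q ≤ n := le_trans (hgdeg d0 hd0) (hdsum_le d0 hd0)
  -- suppose q = n; derive contradiction
  by_contra hcon
  have hq_eq : q = n := by omega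
  rw [hq_eq] at hgdeg
  -- every monomial of g is the all-ones monomial
  set dall : Fin n →₀ ℕ := Finsupp.equivFunOnFinite.symm (fun _ => 1) with hdall
  have hdall_apply : ∀ j, dall j = 1 := fun j => rfl
  have hsupp : ∀ d ∈ g.support, d = dall := by
    intro d hd
    ext j
    rw [hdall_apply]
    by_contra hne
    have hj0 : d j = 0 := by have := hdle d hd j; omega
    have hlt : ∑ i, d i < ∑ _i : Fin n, 1 := by
      refine Finset.sum_lt_sum (fun i _ => hdle d hd i) ⟨j, Finset.mem_univ j, by omega⟩
    have : (d.sum fun _ e => e) < n := by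
      rw [hsum_eq]; simpa using hlt
    exact absurd (hgdeg d hd) (by omega)
  -- g is a single monomial
  set c : K := coeff dall g with hc
  have hgmono : g = monomial dall c := by
    ext d'
    rw [coeff_monomial]
    by_cases h : d' = dall
    · subst h; simp [hc]
    · rw [if_neg (fun he => h he.symm)]
      by_contra hne
      exact h (hsupp d' (by simpa [MvPolynomial.mem_support_iff] using hne))
  -- f factors as C c * ∏ (X j - C (P j))
  have hfact : f = C c * ∏ j, t j := by
    have := hcomp f
    rw [← hg] at this
    rw [← this, hgmono, aeval_monomial]
    congr 1
    rw [Finsupp.prod_fintype _ _ (fun j => pow_zero (t j))]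
    exact Finset.prod_congr rfl fun j _ => by rw [hdall_apply, pow_one]
  set i0 : Fin n := ⟨0, by omega⟩
  set i1 : Fin n := ⟨1, by omega⟩
  have hfact2 : f = (C c * t i0) * ∏ j ∈ Finset.univ.erase i0, t j := by
    rw [hfact, mul_assoc, Finset.mul_prod_erase Finset.univ t (Finset.mem_univ i0)]
  have heval : ∀ j, eval P (t j) = 0 := by
    intro j; simp [ht]
  rcases hirr.isUnit_or_isUnit hfact2 with h | h
  · have := h.map (eval P)
    rw [map_mul, heval i0, mul_zero] at this
    exact not_isUnit_zero this
  · have := h.map (eval P)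
    rw [map_prod] at this
    have hz : ∏ j ∈ Finset.univ.erase i0, eval P (t j) = 0 := by
      refine Finset.prod_eq_zero (i := i1) ?_ (heval i1)
      refine Finset.mem_erase.mpr ⟨?_, Finset.mem_univ i1⟩
      intro he
      have : (1 : ℕ) = 0 := congrArg Fin.val he
      omega
    rw [hz] at this
    exact not_isUnit_zero this
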